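/- Strict n-tuple consequence coincides with K3 consequence: for all sets of sentences Γ ∪ {A}, Γ ⊨_{n,s} A if and only if Γ ⊨_k A. -/

import Mathlib

/-- Helper instance so that instance search for the lexicographic order does not get stuck. -/
instance (n : ℕ) : WellFoundedLT (Fin n) := inferInstance

/-- `2^n`: the `n`-fold product of the two-element Boolean algebra `2 = {0,1}` (as `Bool`,
with `false = 0`, `true = 1`), carrying the lexicographic order. -/
abbrev Tup (n : ℕ) := Lex (Fin n → Bool)

/-- The componentwise complement `-⟨x₁,…,xₙ⟩ = ⟨1-x₁,…,1-xₙ⟩` on `2^n`. -/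
def tneg {n : ℕ} (x : Tup n) : Tup n := toLex fun i => !(ofLex x i)

/-- The top value `⟨1,…,1⟩` of `2^n`. -/
def tTop (n : ℕ) : Tup n := toLex fun _ => true

/-- The bottom value `⟨0,…,0⟩` of `2^n`. -/
def tBot (n : ℕ) : Tup n := toLex fun _ => false

/-- The three truth values `f < i < t` (i.e. `0 < 1/2 < 1`). -/
inductive V3 where
  | f | i | t
deriving DecidableEq

instance : Fintype V3 where
  elems := {V3.f, V3.i, V3.t}
  complete := fun x => by cases x <;> simp

def V3.toFin : V3 → Fin 3
  | .f => 0 | .i => 1 | .t => 2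

instance : LinearOrder V3 := LinearOrder.lift' V3.toFin (by decide)

/-- Three-valued negation: `1 - x`. -/
def V3.negv : V3 → V3
  | .t => .f | .i => .i | .f => .t

instance (n : ℕ) : Fintype (Tup n) := Fintype.ofEquiv _ toLex
instance (n : ℕ) : Nonempty (Tup n) := ⟨tBot n⟩
noncomputable instance (n : ℕ) : CompleteLinearOrder (Tup n) :=
  Fintype.toCompleteLinearOrder _
instance : Nonempty V3 := ⟨V3.t⟩
noncomputable instance : CompleteLinearOrder V3 :=
  Fintype.toCompleteLinearOrderOfNonempty _

/-- Terms of a first-order language: variables and constant symbols. -/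
inductive Term (Const : Type) where
  | var : ℕ → Term Const
  | const : Const → Term Const

/-- First-order formulas over predicate symbols `Pred` (with arities `ar`),
constants `Const`, and the connectives `¬, ∧, ∨, ∀, ∃`. -/
inductive FForm (Pred Const : Type) (ar : Pred → ℕ) where
  | atom : (P : Pred) → (Fin (ar P) → Term Const) → FForm Pred Const ar
  | neg : FForm Pred Const ar → FForm Pred Const ar
  | conj : FForm Pred Const ar → FForm Pred Const ar → FForm Pred Const ar
  | disj : FForm Pred Const ar → FForm Pred Const ar → FForm Pred Const ar
  | all : ℕ → FForm Pred Const ar → FForm Pred Const ar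
  | ex : ℕ → FForm Pred Const ar → FForm Pred Const ar

/-- Evaluation of terms, given interpretations of the constants and an assignment. -/
def Term.evalt {Const D : Type} (cv : Const → D) (σ : ℕ → D) : Term Const → D
  | .var x => σ x
  | .const c => cv c

/-- The Clemens valuation over `2^n`: componentwise complement for `¬`, lexicographic
min/max for `∧`/`∨`, and inf/sup over the domain for the quantifiers. -/
noncomputable def fevalT {Pred Const : Type} {ar : Pred → ℕ} {n : ℕ} {D : Type}
    (cv : Const → D) (pv : (P : Pred) → (Fin (ar P) → D) → Tup n) (σ : ℕ → D) :
    FForm Pred Const ar → Tup n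
  | .atom P ts => pv P fun j => (ts j).evalt cv σ
  | .neg A => tneg (fevalT cv pv σ A)
  | .conj A B => min (fevalT cv pv σ A) (fevalT cv pv σ B)
  | .disj A B => max (fevalT cv pv σ A) (fevalT cv pv σ B)
  | .all x A => ⨅ d : D, fevalT cv pv (Function.update σ x d) A
  | .ex x A => ⨆ d : D, fevalT cv pv (Function.update σ x d) A

/-- The three-valued (strong Kleene / LP) valuation over `{0, 1/2, 1}`: `1 - x` for `¬`,
min/max for `∧`/`∨`, and inf/sup over the domain for the quantifiers. -/
noncomputable def feval3 {Pred Const : Type} {ar : Pred → ℕ} {D : Type}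
    (cv : Const → D) (pv : (P : Pred) → (Fin (ar P) → D) → V3) (σ : ℕ → D) :
    FForm Pred Const ar → V3
  | .atom P ts => pv P fun j => (ts j).evalt cv σ
  | .neg A => (feval3 cv pv σ A).negv
  | .conj A B => min (feval3 cv pv σ A) (feval3 cv pv σ B)
  | .disj A B => max (feval3 cv pv σ A) (feval3 cv pv σ B)
  | .all x A => ⨅ d : D, feval3 cv pv (Function.update σ x d) A
  | .ex x A => ⨆ d : D, feval3 cv pv (Function.update σ x d) A

/-- Strict consequence `Γ ⊨_{n,s} A`: in every Clemens interpretation (with nonempty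
domain) and assignment, if every premise takes the value `⟨1,…,1⟩`, so does `A`. -/
def ConseqS (n : ℕ) (Pred Const : Type) (ar : Pred → ℕ)
    (Γ : Set (FForm Pred Const ar)) (A : FForm Pred Const ar) : Prop :=
  ∀ (D : Type) (_ : Nonempty D) (cv : Const → D)
    (pv : (P : Pred) → (Fin (ar P) → D) → Tup n) (σ : ℕ → D),
    (∀ B ∈ Γ, fevalT cv pv σ B = tTop n) → fevalT cv pv σ A = tTop n

/-- Tolerant consequence `Γ ⊨_{n,t} A`: preservation of values `≠ ⟨0,…,0⟩`. -/
def ConseqT (n : ℕ) (Pred Const : Type) (ar : Pred → ℕ)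
    (Γ : Set (FForm Pred Const ar)) (A : FForm Pred Const ar) : Prop :=
  ∀ (D : Type) (_ : Nonempty D) (cv : Const → D)
    (pv : (P : Pred) → (Fin (ar P) → D) → Tup n) (σ : ℕ → D),
    (∀ B ∈ Γ, fevalT cv pv σ B ≠ tBot n) → fevalT cv pv σ A ≠ tBot n

/-- Strict-tolerant consequence `Γ ⊨_{n,s,t} A`: if all premises take value `⟨1,…,1⟩`,
the conclusion takes a value `≠ ⟨0,…,0⟩`. -/
def ConseqNST (n : ℕ) (Pred Const : Type) (ar : Pred → ℕ)
    (Γ : Set (FForm Pred Const ar)) (A : FForm Pred Const ar) : Prop :=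
  ∀ (D : Type) (_ : Nonempty D) (cv : Const → D)
    (pv : (P : Pred) → (Fin (ar P) → D) → Tup n) (σ : ℕ → D),
    (∀ B ∈ Γ, fevalT cv pv σ B = tTop n) → fevalT cv pv σ A ≠ tBot n

/-- K3 consequence `Γ ⊨_k A`: preservation of the value `1` in all three-valued
(strong Kleene) interpretations. -/
def ConseqK (Pred Const : Type) (ar : Pred → ℕ)
    (Γ : Set (FForm Pred Const ar)) (A : FForm Pred Const ar) : Prop :=
  ∀ (D : Type) (_ : Nonempty D) (cv : Const → D)
    (pv : (P : Pred) → (Fin (ar P) → D) → V3) (σ : ℕ → D),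
    (∀ B ∈ Γ, feval3 cv pv σ B = V3.t) → feval3 cv pv σ A = V3.t

/-- LP consequence `Γ ⊨_l A`: preservation of the designated values `{1, 1/2}`. -/
def ConseqL (Pred Const : Type) (ar : Pred → ℕ)
    (Γ : Set (FForm Pred Const ar)) (A : FForm Pred Const ar) : Prop :=
  ∀ (D : Type) (_ : Nonempty D) (cv : Const → D)
    (pv : (P : Pred) → (Fin (ar P) → D) → V3) (σ : ℕ → D),
    (∀ B ∈ Γ, feval3 cv pv σ B ∈ ({V3.t, V3.i} : Set V3)) →
      feval3 cv pv σ A ∈ ({V3.t, V3.i} : Set V3)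

/-- ST consequence `Γ ⊨_st A`: if all premises take value `1`, the conclusion takes a
value in `{1, 1/2}`. -/
def ConseqST (Pred Const : Type) (ar : Pred → ℕ)
    (Γ : Set (FForm Pred Const ar)) (A : FForm Pred Const ar) : Prop :=
  ∀ (D : Type) (_ : Nonempty D) (cv : Const → D)
    (pv : (P : Pred) → (Fin (ar P) → D) → V3) (σ : ℕ → D),
    (∀ B ∈ Γ, feval3 cv pv σ B = V3.t) → feval3 cv pv σ A ∈ ({V3.t, V3.i} : Set V3)


open scoped Classical in
/-- Collapse map from `2^n` to the three values. -/
noncomputable def gmap {n : ℕ} (x : Tup n) : V3 :=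
  if x = tTop n then .t else if x = tBot n then .f else .i

lemma le_tTop {n : ℕ} (x : Tup n) : x ≤ tTop n :=
  Pi.toLex_monotone (fun i => Bool.le_true _)

lemma tBot_le {n : ℕ} (x : Tup n) : tBot n ≤ x :=
  Pi.toLex_monotone (fun i => Bool.false_le _)

lemma tneg_eq_bot_iff {n : ℕ} (x : Tup n) : tneg x = tBot n ↔ x = tTop n := by
  constructor
  · intro h
    funext i
    have := congrFun h i
    simpa [tneg, tTop, tBot] using this
  · rintro rfl
    funext i
    simp [tneg, tTop, tBot]

lemma tneg_eq_top_iff {n : ℕ} (x : Tup n) : tneg x = tTop n ↔ x = tBot n := by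
  constructor
  · intro h
    funext i
    have := congrFun h i
    simpa [tneg, tTop, tBot] using this
  · rintro rfl
    funext i
    simp [tneg, tTop, tBot]

lemma tTop_ne_tBot {n : ℕ} (hn : 0 < n) : tTop n ≠ tBot n := by
  intro h
  have := congrFun h ⟨0, hn⟩
  simp [tTop, tBot] at this

lemma gmap_eq_t_iff {n : ℕ} (hn : 0 < n) (x : Tup n) : gmap x = .t ↔ x = tTop n := by
  unfold gmap
  split_ifs with h1 h2 <;> simp_all

lemma gmap_tTop {n : ℕ} : gmap (tTop n) = .t := by simp [gmap]

lemma gmap_tBot {n : ℕ} (hn : 0 < n) : gmap (tBot n) = .f := by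
  unfold gmap
  rw [if_neg (Ne.symm (tTop_ne_tBot hn)), if_pos rfl]

lemma gmap_tneg {n : ℕ} (hn : 0 < n) (x : Tup n) : gmap (tneg x) = (gmap x).negv := by
  rcases eq_or_ne x (tTop n) with rfl|h1
  · rw [(tneg_eq_bot_iff _).2 rfl, gmap_tBot hn, gmap_tTop]; rfl
  rcases eq_or_ne x (tBot n) with rfl|h2
  · rw [(tneg_eq_top_iff _).2 rfl, gmap_tBot hn, gmap_tTop]; rfl
  · have hgi : gmap x = V3.i := by unfold gmap; rw [if_neg h1, if_neg h2]
    have hgni : gmap (tneg x) = V3.i := by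
      unfold gmap
      rw [if_neg (fun h => h2 ((tneg_eq_top_iff _).1 h)),
        if_neg (fun h => h1 ((tneg_eq_bot_iff _).1 h))]
    rw [hgi, hgni]; rfl

lemma gmap_mono {n : ℕ} (hn : 0 < n) : Monotone (gmap (n := n)) := by
  intro x y hxy
  unfold gmap
  by_cases hx : x = tTop n
  · subst hx
    have : y = tTop n := le_antisymm (le_tTop y) hxy
    subst this; simp
  · by_cases hy : y = tBot n
    · subst hy
      have : x = tBot n := le_antisymm hxy (tBot_le x)
      subst this; simp
    · rw [if_neg hx]
      by_cases hx2 : x = tBot n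
      · rw [if_pos hx2]
        split_ifs <;> decide
      · rw [if_neg hx2]
        by_cases hy1 : y = tTop n
        · rw [if_pos hy1]; decide
        · rw [if_neg hy1, if_neg hy]

lemma mono_map_iInf {α β : Type*} [CompleteLinearOrder α] [CompleteLinearOrder β]
    [Finite α] {g : α → β} (hg : Monotone g) {D : Type*} [Nonempty D] (f : D → α) :
    g (⨅ d, f d) = ⨅ d, g (f d) := by
  obtain ⟨d₀, hd₀⟩ : ∃ d₀, f d₀ = ⨅ d, f d := by
    have h : sInf (Set.range f) ∈ Set.range f :=
      Set.Nonempty.csInf_mem (Set.range_nonempty f) (Set.toFinite _)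
    obtain ⟨d₀, h⟩ := h
    exact ⟨d₀, by rw [h, iInf]⟩
  have hle : ∀ d, f d₀ ≤ f d := fun d => hd₀ ▸ iInf_le f d
  rw [← hd₀]
  exact le_antisymm (le_iInf fun d => hg (hle d)) (iInf_le _ d₀)

lemma mono_map_iSup {α β : Type*} [CompleteLinearOrder α] [CompleteLinearOrder β]
    [Finite α] {g : α → β} (hg : Monotone g) {D : Type*} [Nonempty D] (f : D → α) :
    g (⨆ d, f d) = ⨆ d, g (f d) := by
  obtain ⟨d₀, hd₀⟩ : ∃ d₀, f d₀ = ⨆ d, f d := by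
    have h : sSup (Set.range f) ∈ Set.range f :=
      Set.Nonempty.csSup_mem (Set.range_nonempty f) (Set.toFinite _)
    obtain ⟨d₀, h⟩ := h
    exact ⟨d₀, by rw [h, iSup]⟩
  have hle : ∀ d, f d ≤ f d₀ := fun d => hd₀ ▸ le_iSup f d
  rw [← hd₀]
  exact le_antisymm (le_iSup (fun d => g (f d)) d₀) (iSup_le fun d => hg (hle d))

/-- Key lemma: the three-valued evaluation of a formula under the collapsed
interpretation is the collapse of the tuple evaluation. -/
lemma feval3_gmap {Pred Const : Type} {ar : Pred → ℕ} {n : ℕ} (hn : 0 < n) {D : Type}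
    [Nonempty D] (cv : Const → D) (pv : (P : Pred) → (Fin (ar P) → D) → Tup n)
    (σ : ℕ → D) (A : FForm Pred Const ar) :
    feval3 cv (fun P v => gmap (pv P v)) σ A = gmap (fevalT cv pv σ A) := by
  induction A generalizing σ with
  | atom P ts => rfl
  | neg A ih => simp [feval3, fevalT, ih, gmap_tneg hn]
  | conj A B ihA ihB =>
      simp [feval3, fevalT, ihA, ihB, (gmap_mono hn).map_min]
  | disj A B ihA ihB =>
      simp [feval3, fevalT, ihA, ihB, (gmap_mono hn).map_max]
  | all x A ih =>
      simp only [feval3, fevalT, ih]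
      exact (@mono_map_iInf (Tup n) V3 Pi.Lex.instCompleteLinearOrderLexForall _ _ gmap (gmap_mono hn) D _ (fun d => fevalT cv pv (Function.update σ x d) A)).symm
  | ex x A ih =>
      simp only [feval3, fevalT, ih]
      exact (@mono_map_iSup (Tup n) V3 Pi.Lex.instCompleteLinearOrderLexForall _ _ gmap (gmap_mono hn) D _ (fun d => fevalT cv pv (Function.update σ x d) A)).symm

/-- A section of the collapse map. -/
def hsec (n : ℕ) : V3 → Tup n
  | .t => tTop n
  | .f => tBot n
  | .i => toLex fun j => decide (j.val ≠ 0)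

lemma gmap_hsec {n : ℕ} (hn : 2 ≤ n) (v : V3) : gmap (hsec n v) = v := by
  have h0 : 0 < n := by omega
  cases v with
  | t => simp [hsec, gmap]
  | f => exact gmap_tBot h0
  | i =>
      have hne1 : hsec n .i ≠ tTop n := by
        intro h
        have := congrFun h ⟨0, h0⟩
        simp [hsec, tTop] at this
      have hne2 : hsec n .i ≠ tBot n := by
        intro h
        have := congrFun h ⟨1, by omega⟩
        simp [hsec, tBot] at this
      simp [gmap, hne1, hne2]

/-- strict `n`-tuple consequence coincides with K3 consequence. -/
theorem strict_iff_K3 (n : ℕ) (hn : 2 ≤ n) (Pred Const : Type) (ar : Pred → ℕ)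
    (Γ : Set (FForm Pred Const ar)) (A : FForm Pred Const ar) :
    ConseqS n Pred Const ar Γ A ↔ ConseqK Pred Const ar Γ A := by
  have h0 : 0 < n := by omega
  constructor
  · intro hS D hD cv pv3 σ hprem
    have : Nonempty D := hD
    set pv : (P : Pred) → (Fin (ar P) → D) → Tup n := fun P v => hsec n (pv3 P v) with hpv
    have hcoll : ∀ (σ : ℕ → D) (B : FForm Pred Const ar),
        feval3 cv pv3 σ B = gmap (fevalT cv pv σ B) := by
      intro σ B
      have := feval3_gmap h0 cv pv σ B
      convert this using 2
      funext P v
      rw [hpv, gmap_hsec hn]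
    have hA : fevalT cv pv σ A = tTop n := by
      apply hS D hD cv pv σ
      intro B hB
      have := hprem B hB
      rw [hcoll σ B, gmap_eq_t_iff h0] at this
      exact this
    rw [hcoll σ A, hA, gmap_tTop]
  · intro hK D hD cv pv σ hprem
    have : Nonempty D := hD
    have hcoll : ∀ (σ : ℕ → D) (B : FForm Pred Const ar),
        feval3 cv (fun P v => gmap (pv P v)) σ B = gmap (fevalT cv pv σ B) :=
      fun σ B => feval3_gmap h0 cv pv σ B
    have hA : feval3 cv (fun P v => gmap (pv P v)) σ A = .t := by
      apply hK D hD cv _ σ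
      intro B hB
      rw [hcoll σ B, hprem B hB, gmap_tTop]
    rw [hcoll σ A, gmap_eq_t_iff h0] at hA
    exact hA
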